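/- For every positive integer n, the graceful chromatic number of the complete graph K_n equals a(n), the least integer k such that {1,...,k} contains an n-element subset with no three distinct elements in arithmetic progression. -/

import Mathlib

open SimpleGraph

/-- A graceful coloring: proper, and differences at each vertex pairwise distinct. -/
def IsGraceful {V : Type*} (G : SimpleGraph V) (f : V → ℕ) : Prop :=
  (∀ ⦃u v⦄, G.Adj u v → f u ≠ f v) ∧
  ∀ ⦃v u w⦄, G.Adj v u → G.Adj v w → u ≠ w →
    ((f v : ℤ) - f u).natAbs ≠ ((f v : ℤ) - f w).natAbs

/-- A graceful `k`-coloring: graceful with colors in `{1,…,k}`. -/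
def IsGracefulK {V : Type*} (G : SimpleGraph V) (k : ℕ) (f : V → ℕ) : Prop :=
  IsGraceful G f ∧ ∀ v, f v ∈ Finset.Icc 1 k

/-- The graceful chromatic number. -/
noncomputable def gracefulChromatic {V : Type*} (G : SimpleGraph V) : ℕ :=
  sInf {k | ∃ f : V → ℕ, IsGracefulK G k f}

/-- The square of a graph: vertices adjacent iff at distance at most 2. -/
def squareGraph {V : Type*} (G : SimpleGraph V) : SimpleGraph V where
  Adj u v := u ≠ v ∧ (G.Adj u v ∨ ∃ w, G.Adj u w ∧ G.Adj w v)
  symm := by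
    constructor
    rintro u v ⟨hne, h | ⟨w, h1, h2⟩⟩
    · exact ⟨hne.symm, Or.inl h.symm⟩
    · exact ⟨hne.symm, Or.inr ⟨w, h2.symm, h1.symm⟩⟩
  loopless := by constructor; rintro u ⟨hne, -⟩; exact hne rfl

/-- A set of naturals is AP-free: no three distinct elements `i, j, l` with `|i-j| = |j-l|`. -/
def APFree (S : Finset ℕ) : Prop :=
  ∀ i ∈ S, ∀ j ∈ S, ∀ l ∈ S, i ≠ j → j ≠ l → i ≠ l →
    ((i : ℤ) - j).natAbs ≠ ((j : ℤ) - l).natAbs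

/-- OEIS A065825: least `k` such that `{1,…,k}` contains an AP-free `n`-element subset. -/
noncomputable def A (n : ℕ) : ℕ :=
  sInf {k | ∃ S ⊆ Finset.Icc 1 k, S.card = n ∧ APFree S}

theorem stmt6 (n : ℕ) (hn : 1 ≤ n) :
    gracefulChromatic (⊤ : SimpleGraph (Fin n)) = A n := by
  unfold gracefulChromatic A
  congr 1
  ext k
  simp only [Set.mem_setOf_eq]
  constructor
  · rintro ⟨f, ⟨⟨hp, hg⟩, hbd⟩⟩
    have hinj : Function.Injective f := by
      intro u v h
      by_contra hne
      exact hp ((SimpleGraph.top_adj u v).mpr hne) h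
    refine ⟨Finset.image f Finset.univ, ?_, ?_, ?_⟩
    · intro x hx
      obtain ⟨v, _, rfl⟩ := Finset.mem_image.mp hx
      exact hbd v
    · rw [Finset.card_image_of_injective _ hinj, Finset.card_univ, Fintype.card_fin]
    · intro i hi j hj l hl hij hjl hil
      obtain ⟨u, _, rfl⟩ := Finset.mem_image.mp hi
      obtain ⟨v, _, rfl⟩ := Finset.mem_image.mp hj
      obtain ⟨w, _, rfl⟩ := Finset.mem_image.mp hl
      have huv : v ≠ u := fun h => hij (by rw [h])
      have hvw : v ≠ w := fun h => hjl (by rw [h])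
      have huw : u ≠ w := fun h => hil (by rw [h])
      have := hg (v := v) (u := u) (w := w) ((SimpleGraph.top_adj v u).mpr huv)
        ((SimpleGraph.top_adj v w).mpr hvw) huw
      omega
  · rintro ⟨S, hS, hcard, hAP⟩
    set e := S.orderIsoOfFin hcard with he
    have hmem : ∀ i : Fin n, (e i : ℕ) ∈ S := fun i => (e i).2
    have hinj : ∀ i j : Fin n, i ≠ j → (e i : ℕ) ≠ (e j : ℕ) := by
      intro i j hij h
      exact hij (e.injective (Subtype.ext h))
    refine ⟨fun i => (e i : ℕ), ⟨⟨?_, ?_⟩, fun v => hS (hmem v)⟩⟩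
    · intro u v huv
      exact hinj u v ((SimpleGraph.top_adj u v).mp huv)
    · intro v u w hvu hvw huw
      have h1 := (SimpleGraph.top_adj v u).mp hvu
      have h2 := (SimpleGraph.top_adj v w).mp hvw
      have := hAP _ (hmem u) _ (hmem v) _ (hmem w)
        (hinj u v (fun h => h1 h.symm)) (hinj v w h2) (hinj u w huw)
      dsimp only
      omega
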